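/- Let a > 0, A > 0, and define f: ℝ → ℝ piecewise in z = |x − c| (for a fixed center c): f(x) = (a/2)z² if z ≤ A; f(x) = −(a/6)(z−A)³ + (a/2)(z−A)² + aAz − (a/2)A² if A < z ≤ A+1; f(x) = ((a/2) + aA)z − a/6 − (a/2)A² − (a/2)A if z > A+1. Then f is twice continuously differentiable on ℝ, with f''(x) = a for z ≤ A, f''(x) = −az + a + aA for A < z ≤ A+1, and f''(x) = 0 for z > A+1; in particular 0 ≤ f''(x) ≤ a everywhere, so f' is a-Lipschitz and f is convex with unique global minimum at x = c. -/

import Mathlib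

open Filter Topology

private lemma relu_sq_deriv (t : ℝ) :
    HasDerivAt (fun s : ℝ => max s 0 ^ 2) (2 * max t 0) t := by
  rcases lt_trichotomy t 0 with h | h | h
  · have hev : (fun s : ℝ => max s 0 ^ 2) =ᶠ[𝓝 t] fun _ => (0:ℝ) := by
      filter_upwards [Iio_mem_nhds h] with s hs
      simp [max_eq_right (Set.mem_Iio.mp hs).le]
    rw [max_eq_right h.le, mul_zero]
    exact (hasDerivAt_const t (0:ℝ)).congr_of_eventuallyEq hev
  · subst h
    rw [hasDerivAt_iff_tendsto_slope]
    have hb : ∀ s : ℝ, ‖slope (fun s : ℝ => max s 0 ^ 2) 0 s‖ ≤ |s| := by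
      intro s
      rcases eq_or_ne s 0 with rfl | hs
      · simp [slope]
      · have h1 : max s 0 ≤ |s| := max_le (le_abs_self s) (abs_nonneg s)
        have h2 : (0:ℝ) ≤ max s 0 := le_max_right _ _
        have h3 : max s 0 ^ 2 ≤ |s| ^ 2 := by nlinarith
        rw [slope_def_field]
        simp only [max_self, ne_eq, OfNat.ofNat_ne_zero, not_false_eq_true, zero_pow, sub_zero,
          Real.norm_eq_abs, abs_div]
        rw [abs_of_nonneg (by positivity : (0:ℝ) ≤ max s 0 ^ 2), div_le_iff₀ (abs_pos.mpr hs)]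
        calc max s 0 ^ 2 ≤ |s| ^ 2 := h3
        _ = |s| * |s| := by ring
    have : Tendsto (fun s : ℝ => |s|) (𝓝[≠] (0:ℝ)) (𝓝 0) := by
      simpa using (continuous_abs.tendsto (0:ℝ)).mono_left nhdsWithin_le_nhds
    simpa using squeeze_zero_norm hb this
  · have hev : (fun s : ℝ => max s 0 ^ 2) =ᶠ[𝓝 t] fun s => s ^ 2 := by
      filter_upwards [Ioi_mem_nhds h] with s hs
      simp [max_eq_left (le_of_lt (Set.mem_Ioi.mp hs))]
    rw [max_eq_left h.le]
    have := hasDerivAt_pow 2 t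
    simpa [mul_comm] using this.congr_of_eventuallyEq hev

private lemma relu_cube_deriv (t : ℝ) :
    HasDerivAt (fun s : ℝ => max s 0 ^ 3) (3 * max t 0 ^ 2) t := by
  rcases lt_trichotomy t 0 with h | h | h
  · have hev : (fun s : ℝ => max s 0 ^ 3) =ᶠ[𝓝 t] fun _ => (0:ℝ) := by
      filter_upwards [Iio_mem_nhds h] with s hs
      simp [max_eq_right (Set.mem_Iio.mp hs).le]
    rw [max_eq_right h.le]
    simpa using (hasDerivAt_const t (0:ℝ)).congr_of_eventuallyEq hev
  · subst h
    rw [hasDerivAt_iff_tendsto_slope]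
    have hb : ∀ s : ℝ, ‖slope (fun s : ℝ => max s 0 ^ 3) 0 s‖ ≤ s ^ 2 := by
      intro s
      rcases eq_or_ne s 0 with rfl | hs
      · simp [slope]
      · have h1 : max s 0 ≤ |s| := max_le (le_abs_self s) (abs_nonneg s)
        have h2 : (0:ℝ) ≤ max s 0 := le_max_right _ _
        have h3 : max s 0 ^ 3 ≤ |s| ^ 3 := pow_le_pow_left₀ h2 h1 3
        rw [slope_def_field]
        simp only [max_self, ne_eq, OfNat.ofNat_ne_zero, not_false_eq_true, zero_pow, sub_zero,
          Real.norm_eq_abs, abs_div]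
        rw [abs_of_nonneg (by positivity : (0:ℝ) ≤ max s 0 ^ 3), div_le_iff₀ (abs_pos.mpr hs)]
        have : s ^ 2 * |s| = |s| ^ 3 := by rw [← sq_abs]; ring
        rw [this]; exact h3
    have : Tendsto (fun s : ℝ => s ^ 2) (𝓝[≠] (0:ℝ)) (𝓝 0) := by
      simpa using ((continuous_pow 2 (M := ℝ)).tendsto (0:ℝ)).mono_left nhdsWithin_le_nhds
    simpa using squeeze_zero_norm hb this
  · have hev : (fun s : ℝ => max s 0 ^ 3) =ᶠ[𝓝 t] fun s => s ^ 3 := by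
      filter_upwards [Ioi_mem_nhds h] with s hs
      simp [max_eq_left (le_of_lt (Set.mem_Ioi.mp hs))]
    rw [max_eq_left h.le]
    have := hasDerivAt_pow 3 t
    simpa [mul_comm] using this.congr_of_eventuallyEq hev

private lemma relu_window (t : ℝ) :
    0 ≤ max t 0 - max (t - 1) 0 ∧ max t 0 - max (t - 1) 0 ≤ 1 := by
  rcases le_total t 0 with h | h <;> rcases le_total t 1 with h' | h' <;>
    constructor <;> simp [max_def] <;> split_ifs <;> linarith

private noncomputable def Ffun (a A c : ℝ) : ℝ → ℝ := fun x =>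
  a/2*(x-c)^2 - a/6*(max (x-c-A) 0 ^ 3 + max (c-x-A) 0 ^ 3)
    + a/6*(max (x-c-A-1) 0 ^ 3 + max (c-x-A-1) 0 ^ 3)

private noncomputable def Dfun (a A c : ℝ) : ℝ → ℝ := fun x =>
  a*(x-c) - a/6*(3 * max (x-c-A) 0 ^ 2 * 1 + 3 * max (c-x-A) 0 ^ 2 * (0-1))
    + a/6*(3 * max (x-c-A-1) 0 ^ 2 * 1 + 3 * max (c-x-A-1) 0 ^ 2 * (0-1))

private noncomputable def Sfun (a A c : ℝ) : ℝ → ℝ := fun x =>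
  a - a*((max (x-c-A) 0 - max (x-c-A-1) 0) + (max (c-x-A) 0 - max (c-x-A-1) 0))

private lemma hasDerivAt_F (a A c x : ℝ) : HasDerivAt (Ffun a A c) (Dfun a A c x) x := by
  have h1 : HasDerivAt (fun y : ℝ => y - c - A) 1 x :=
    ((hasDerivAt_id x).sub_const c).sub_const A
  have h2 : HasDerivAt (fun y : ℝ => c - y - A) (0-1) x :=
    ((hasDerivAt_const x c).sub (hasDerivAt_id x)).sub_const A
  have h3 : HasDerivAt (fun y : ℝ => y - c - A - 1) 1 x := h1.sub_const 1
  have h4 : HasDerivAt (fun y : ℝ => c - y - A - 1) (0-1) x := h2.sub_const 1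
  have c1 : HasDerivAt (fun y : ℝ => max (y - c - A) 0 ^ 3)
      (3 * max (x - c - A) 0 ^ 2 * 1) x := by have := (relu_cube_deriv (x - c - A)).comp x h1; exact this
  have c2 : HasDerivAt (fun y : ℝ => max (c - y - A) 0 ^ 3)
      (3 * max (c - x - A) 0 ^ 2 * (0-1)) x := by have := (relu_cube_deriv (c - x - A)).comp x h2; exact this
  have c3 : HasDerivAt (fun y : ℝ => max (y - c - A - 1) 0 ^ 3)
      (3 * max (x - c - A - 1) 0 ^ 2 * 1) x := by have := (relu_cube_deriv (x - c - A - 1)).comp x h3; exact this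
  have c4 : HasDerivAt (fun y : ℝ => max (c - y - A - 1) 0 ^ 3)
      (3 * max (c - x - A - 1) 0 ^ 2 * (0-1)) x := by have := (relu_cube_deriv (c - x - A - 1)).comp x h4; exact this
  have q : HasDerivAt (fun y : ℝ => a/2*(y-c)^2) (a/2*(2*(x-c)^1*1)) x := by
    exact (((hasDerivAt_id x).sub_const c).pow 2).const_mul (a/2)
  have total := (q.sub ((c1.add c2).const_mul (a/6))).add ((c3.add c4).const_mul (a/6))
  have : HasDerivAt (Ffun a A c)
      (a/2*(2*(x-c)^1*1) - a/6*(3 * max (x-c-A) 0 ^ 2 * 1 + 3 * max (c-x-A) 0 ^ 2 * (0-1))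
        + a/6*(3 * max (x-c-A-1) 0 ^ 2 * 1 + 3 * max (c-x-A-1) 0 ^ 2 * (0-1))) x := total
  convert this using 1
  unfold Dfun; ring

private lemma hasDerivAt_D (a A c x : ℝ) : HasDerivAt (Dfun a A c) (Sfun a A c x) x := by
  have h1 : HasDerivAt (fun y : ℝ => y - c - A) 1 x :=
    ((hasDerivAt_id x).sub_const c).sub_const A
  have h2 : HasDerivAt (fun y : ℝ => c - y - A) (0-1) x :=
    ((hasDerivAt_const x c).sub (hasDerivAt_id x)).sub_const A
  have h3 : HasDerivAt (fun y : ℝ => y - c - A - 1) 1 x := h1.sub_const 1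
  have h4 : HasDerivAt (fun y : ℝ => c - y - A - 1) (0-1) x := h2.sub_const 1
  have c1 : HasDerivAt (fun y : ℝ => max (y - c - A) 0 ^ 2)
      (2 * max (x - c - A) 0 * 1) x := by have := (relu_sq_deriv (x - c - A)).comp x h1; exact this
  have c2 : HasDerivAt (fun y : ℝ => max (c - y - A) 0 ^ 2)
      (2 * max (c - x - A) 0 * (0-1)) x := by have := (relu_sq_deriv (c - x - A)).comp x h2; exact this
  have c3 : HasDerivAt (fun y : ℝ => max (y - c - A - 1) 0 ^ 2)
      (2 * max (x - c - A - 1) 0 * 1) x := by have := (relu_sq_deriv (x - c - A - 1)).comp x h3; exact this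
  have c4 : HasDerivAt (fun y : ℝ => max (c - y - A - 1) 0 ^ 2)
      (2 * max (c - x - A - 1) 0 * (0-1)) x := by have := (relu_sq_deriv (c - x - A - 1)).comp x h4; exact this
  have lin : HasDerivAt (fun y : ℝ => a*(y-c)) (a*1) x :=
    ((hasDerivAt_id x).sub_const c).const_mul a
  have q1 := (c1.const_mul 3).mul_const 1
  have q2 := (c2.const_mul 3).mul_const (0-1)
  have q3 := (c3.const_mul 3).mul_const 1
  have q4 := (c4.const_mul 3).mul_const (0-1)
  have total := (lin.sub ((q1.add q2).const_mul (a/6))).add ((q3.add q4).const_mul (a/6))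
  have h : HasDerivAt (Dfun a A c)
      (a*1 - a/6*(3 * (2 * max (x-c-A) 0 * 1) * 1 + 3 * (2 * max (c-x-A) 0 * (0-1)) * (0-1))
        + a/6*(3 * (2 * max (x-c-A-1) 0 * 1) * 1
          + 3 * (2 * max (c-x-A-1) 0 * (0-1)) * (0-1))) x := total
  convert h using 1
  unfold Sfun; ring


private lemma S_bounds (a A c : ℝ) (ha : 0 < a) (hA : 0 < A) (x : ℝ) :
    0 ≤ Sfun a A c x ∧ Sfun a A c x ≤ a := by
  unfold Sfun
  rcases le_total x c with hx | hx
  · have e1 : max (x - c - A) 0 = 0 := max_eq_right (by linarith)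
    have e2 : max (x - c - A - 1) 0 = 0 := max_eq_right (by linarith)
    have w := relu_window (c - x - A)
    rw [e1, e2]
    constructor <;> nlinarith [w.1, w.2]
  · have e1 : max (c - x - A) 0 = 0 := max_eq_right (by linarith)
    have e2 : max (c - x - A - 1) 0 = 0 := max_eq_right (by linarith)
    have w := relu_window (x - c - A)
    rw [e1, e2]
    constructor <;> nlinarith [w.1, w.2]

private lemma S_cont (a A c : ℝ) : Continuous (Sfun a A c) := by
  unfold Sfun; fun_prop

/-- The cubic-capped quadratic building block of the FOM divergence
counterexample is C², with the stated second derivative, which lies in [0, a];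
hence f' is a-Lipschitz, f is convex, and f has a unique global minimum at c. -/
theorem capped_quadratic_properties (a A c : ℝ) (ha : 0 < a) (hA : 0 < A)
    (f : ℝ → ℝ)
    (hf : f = fun x =>
      if |x - c| ≤ A then a / 2 * |x - c| ^ 2
      else if |x - c| ≤ A + 1 then
        -(a / 6) * (|x - c| - A) ^ 3 + a / 2 * (|x - c| - A) ^ 2
          + a * A * |x - c| - a / 2 * A ^ 2
      else (a / 2 + a * A) * |x - c| - a / 6 - a / 2 * A ^ 2 - a / 2 * A) :
    ContDiff ℝ 2 f ∧
    (∀ x, |x - c| ≤ A → deriv (deriv f) x = a) ∧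
    (∀ x, A < |x - c| → |x - c| ≤ A + 1 →
      deriv (deriv f) x = -a * |x - c| + a + a * A) ∧
    (∀ x, A + 1 < |x - c| → deriv (deriv f) x = 0) ∧
    (∀ x, 0 ≤ deriv (deriv f) x ∧ deriv (deriv f) x ≤ a) ∧
    (∀ x y, |deriv f x - deriv f y| ≤ a * |x - y|) ∧
    ConvexOn ℝ Set.univ f ∧
    (∀ x, f c ≤ f x) ∧ (∀ x, f x = f c → x = c) := by
  -- the closed form
  have hfF : f = Ffun a A c := by
    funext x
    have l1 : x - c ≤ |x - c| := le_abs_self _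
    have l2 : c - x ≤ |x - c| := by rw [abs_sub_comm]; exact le_abs_self _
    simp only [hf]
    unfold Ffun
    split_ifs with hz1 hz2
    · rw [max_eq_right (by linarith : x - c - A ≤ (0:ℝ)),
        max_eq_right (by linarith : c - x - A ≤ (0:ℝ)),
        max_eq_right (by linarith : x - c - A - 1 ≤ (0:ℝ)),
        max_eq_right (by linarith : c - x - A - 1 ≤ (0:ℝ)), sq_abs]
      ring
    · push_neg at hz1
      rcases abs_cases (x - c) with ⟨h1, h2⟩ | ⟨h1, h2⟩
      · rw [h1] at hz1 hz2 ⊢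
        rw [max_eq_left (by linarith : (0:ℝ) ≤ x - c - A),
          max_eq_right (by linarith : c - x - A ≤ (0:ℝ)),
          max_eq_right (by linarith : x - c - A - 1 ≤ (0:ℝ)),
          max_eq_right (by linarith : c - x - A - 1 ≤ (0:ℝ))]
        ring
      · rw [h1] at hz1 hz2 ⊢
        rw [max_eq_right (by linarith : x - c - A ≤ (0:ℝ)),
          max_eq_left (by linarith : (0:ℝ) ≤ c - x - A),
          max_eq_right (by linarith : x - c - A - 1 ≤ (0:ℝ)),
          max_eq_right (by linarith : c - x - A - 1 ≤ (0:ℝ))]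
        ring
    · push_neg at hz1 hz2
      rcases abs_cases (x - c) with ⟨h1, h2⟩ | ⟨h1, h2⟩
      · rw [h1] at hz1 hz2 ⊢
        rw [max_eq_left (by linarith : (0:ℝ) ≤ x - c - A),
          max_eq_right (by linarith : c - x - A ≤ (0:ℝ)),
          max_eq_left (by linarith : (0:ℝ) ≤ x - c - A - 1),
          max_eq_right (by linarith : c - x - A - 1 ≤ (0:ℝ))]
        ring
      · rw [h1] at hz1 hz2 ⊢
        rw [max_eq_right (by linarith : x - c - A ≤ (0:ℝ)),
          max_eq_left (by linarith : (0:ℝ) ≤ c - x - A),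
          max_eq_right (by linarith : x - c - A - 1 ≤ (0:ℝ)),
          max_eq_left (by linarith : (0:ℝ) ≤ c - x - A - 1)]
        ring
  have hD : ∀ x, HasDerivAt f (Dfun a A c x) x := by
    rw [hfF]; exact hasDerivAt_F a A c
  have hderiv : deriv f = Dfun a A c := funext fun x => (hD x).deriv
  have hS : ∀ x, HasDerivAt (deriv f) (Sfun a A c x) x := by
    rw [hderiv]; exact hasDerivAt_D a A c
  have hderiv2 : deriv (deriv f) = Sfun a A c := funext fun x => (hS x).deriv
  have hdiff : Differentiable ℝ f := fun x => (hD x).differentiableAt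
  have hdiff' : Differentiable ℝ (deriv f) := fun x => (hS x).differentiableAt
  have Sb := S_bounds a A c ha hA
  have hfc : f c = 0 := by rw [hf]; simp [hA.le]
  have hpos : ∀ x, x ≠ c → 0 < f x := by
    intro x hx
    have hz0 : 0 < |x - c| := abs_pos.mpr (sub_ne_zero.mpr hx)
    rw [hf]
    simp only []
    split_ifs with hz1 hz2
    · nlinarith [mul_pos hz0 hz0]
    · push_neg at hz1
      set z := |x - c| with hz
      have hw1 : z - A ≤ 1 := by linarith
      have hw0 : 0 < z - A := by linarith
      have hzpos : 0 < z := by linarith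
      have k1 : (z - A) ^ 3 ≤ (z - A) ^ 2 := by nlinarith [sq_nonneg (z - A)]
      have k2 : (z - A) ^ 2 ≤ z ^ 2 := by nlinarith
      have k3 : a / 6 * (z - A) ^ 3 ≤ a / 6 * z ^ 2 := by nlinarith
      have k4 : 0 < a / 3 * z ^ 2 := by positivity
      nlinarith [k3, k4]
    · push_neg at hz1 hz2
      nlinarith [mul_pos ha hA, mul_pos (mul_pos ha hA) hA,
        mul_pos ha (show (0:ℝ) < |x - c| - (A + 1) by linarith),
        mul_pos (mul_pos ha hA) (show (0:ℝ) < |x - c| - (A + 1) by linarith)]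
  refine ⟨?_, ?_, ?_, ?_, ?_, ?_, ?_, ?_, ?_⟩
  · -- C²
    rw [show (2 : WithTop ℕ∞) = 1 + 1 by norm_num]
    refine contDiff_succ_iff_deriv.mpr ⟨hdiff, by simp, ?_⟩
    exact contDiff_one_iff_deriv.mpr ⟨hdiff', by rw [hderiv2]; exact S_cont a A c⟩
  · intro x hx
    have l1 : x - c ≤ |x - c| := le_abs_self _
    have l2 : c - x ≤ |x - c| := by rw [abs_sub_comm]; exact le_abs_self _
    rw [hderiv2]
    unfold Sfun
    rw [max_eq_right (by linarith : x - c - A ≤ (0:ℝ)),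
      max_eq_right (by linarith : c - x - A ≤ (0:ℝ)),
      max_eq_right (by linarith : x - c - A - 1 ≤ (0:ℝ)),
      max_eq_right (by linarith : c - x - A - 1 ≤ (0:ℝ))]
    ring
  · intro x hx1 hx2
    rw [hderiv2]
    unfold Sfun
    rcases abs_cases (x - c) with ⟨h1, h2⟩ | ⟨h1, h2⟩
    · rw [h1] at hx1 hx2 ⊢
      rw [max_eq_left (by linarith : (0:ℝ) ≤ x - c - A),
        max_eq_right (by linarith : x - c - A - 1 ≤ (0:ℝ)),
        max_eq_right (by linarith : c - x - A ≤ (0:ℝ)),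
        max_eq_right (by linarith : c - x - A - 1 ≤ (0:ℝ))]
      ring
    · rw [h1] at hx1 hx2 ⊢
      rw [max_eq_right (by linarith : x - c - A ≤ (0:ℝ)),
        max_eq_right (by linarith : x - c - A - 1 ≤ (0:ℝ)),
        max_eq_left (by linarith : (0:ℝ) ≤ c - x - A),
        max_eq_right (by linarith : c - x - A - 1 ≤ (0:ℝ))]
      ring
  · intro x hx
    rw [hderiv2]
    unfold Sfun
    rcases abs_cases (x - c) with ⟨h1, h2⟩ | ⟨h1, h2⟩
    · rw [h1] at hx
      rw [max_eq_left (by linarith : (0:ℝ) ≤ x - c - A),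
        max_eq_left (by linarith : (0:ℝ) ≤ x - c - A - 1),
        max_eq_right (by linarith : c - x - A ≤ (0:ℝ)),
        max_eq_right (by linarith : c - x - A - 1 ≤ (0:ℝ))]
      ring
    · rw [h1] at hx
      rw [max_eq_right (by linarith : x - c - A ≤ (0:ℝ)),
        max_eq_right (by linarith : x - c - A - 1 ≤ (0:ℝ)),
        max_eq_left (by linarith : (0:ℝ) ≤ c - x - A),
        max_eq_left (by linarith : (0:ℝ) ≤ c - x - A - 1)]
      ring
  · intro x
    rw [hderiv2]
    exact Sb x
  · intro x y
    have key := Convex.norm_image_sub_le_of_norm_hasDerivWithin_le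
      (f := deriv f) (f' := Sfun a A c) (s := Set.univ)
      (fun z _ => (hS z).hasDerivWithinAt)
      (fun z _ => by
        rw [Real.norm_eq_abs, abs_le]
        exact ⟨by linarith [(Sb z).1], (Sb z).2⟩)
      convex_univ (Set.mem_univ y) (Set.mem_univ x)
    simpa [Real.norm_eq_abs] using key
  · refine convexOn_univ_of_deriv2_nonneg hdiff hdiff' fun x => ?_
    have e : deriv^[2] f x = deriv (deriv f) x := by
      rw [Function.iterate_succ_apply', Function.iterate_one]
    rw [e, hderiv2]
    exact (Sb x).1
  · intro x
    rcases eq_or_ne x c with rfl | hx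
    · exact le_refl _
    · rw [hfc]; exact (hpos x hx).le
  · intro x hx
    by_contra h
    have h0 := hpos x h
    rw [hx, hfc] at h0
    exact lt_irrefl 0 h0
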